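/- If f : ℝⁿ → ℝ is three times continuously differentiable, then for the modified secant vector z_k^(3) = y_k + (3μ_k/‖s_k‖²) s_k with μ_k = 2(f_k − f_{k+1}) + (g_k + g_{k+1})ᵀ s_k, one has s_kᵀ ∇²f(x_{k+1}) s_k − s_kᵀ z_k^(3) = o(‖s_k‖³) as ‖s_k‖ → 0; i.e., 6(f_k − f_{k+1}) + 3(g_k + g_{k+1})ᵀ s_k + s_kᵀ y_k − s_kᵀ∇²f(x_{k+1})s_k = o(‖s_k‖³). -/

import Mathlib

open Asymptotics Filter
open scoped RealInnerProductSpace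

/-- Mean value bootstrap: if `ψ 0 = 0` and `ψ' =o(‖s‖^k)` then `ψ =o(‖s‖^(k+1))`. -/
lemma aux_littleO_step {E F : Type*} [NormedAddCommGroup E] [NormedSpace ℝ E]
    [NormedAddCommGroup F] [NormedSpace ℝ F] {ψ : E → F} {ψ' : E → E →L[ℝ] F} {k : ℕ}
    (hψ : ∀ s, HasFDerivAt ψ (ψ' s) s) (h0 : ψ 0 = 0)
    (ho : ψ' =o[nhds 0] fun s => ‖s‖ ^ k) :
    ψ =o[nhds 0] fun s => ‖s‖ ^ (k + 1) := by
  rw [isLittleO_iff] at ho ⊢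
  intro c hc
  rcases Metric.eventually_nhds_iff.1 (ho hc) with ⟨δ, hδ, hb⟩
  rw [Metric.eventually_nhds_iff]
  refine ⟨δ, hδ, fun s hs => ?_⟩
  have hsδ : ‖s‖ < δ := by simpa [dist_eq_norm] using hs
  have hconv : Convex ℝ (Metric.closedBall (0:E) ‖s‖) := convex_closedBall _ _
  have hdiff : ∀ y ∈ Metric.closedBall (0:E) ‖s‖, DifferentiableAt ℝ ψ y :=
    fun y _ => (hψ y).differentiableAt
  have hbound : ∀ y ∈ Metric.closedBall (0:E) ‖s‖, ‖fderiv ℝ ψ y‖ ≤ c * ‖s‖ ^ k := by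
    intro y hy
    have hys : ‖y‖ ≤ ‖s‖ := by simpa [dist_eq_norm] using hy
    have hyδ : dist y 0 < δ := by simpa [dist_eq_norm] using lt_of_le_of_lt hys hsδ
    have := hb hyδ
    rw [(hψ y).fderiv]
    calc ‖ψ' y‖ ≤ c * ‖(‖y‖ ^ k)‖ := this
      _ = c * ‖y‖ ^ k := by rw [Real.norm_of_nonneg (by positivity)]
      _ ≤ c * ‖s‖ ^ k := by gcongr
  have key := hconv.norm_image_sub_le_of_norm_fderiv_le (x := 0) (y := s) hdiff hbound
    (Metric.mem_closedBall_self (norm_nonneg s)) (by simp)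
  rw [h0, sub_zero, sub_zero] at key
  calc ‖ψ s‖ ≤ c * ‖s‖ ^ k * ‖s‖ := key
    _ = c * ‖(‖s‖ ^ (k+1))‖ := by
        rw [Real.norm_of_nonneg (by positivity)]; ring

lemma quad_hasFDerivAt {E F : Type*} [NormedAddCommGroup E] [NormedSpace ℝ E]
    [NormedAddCommGroup F] [NormedSpace ℝ F] (b : E →L[ℝ] E →L[ℝ] F) (h : E) :
    HasFDerivAt (fun z => b z z) (b h + b.flip h) h := by
  have hb := b.isBoundedBilinearMap
  have h1 := (hb.hasFDerivAt (h, h)).comp (f := fun z : E => (z, z)) h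
    ((hasFDerivAt_id h).prodMk (hasFDerivAt_id h))
  convert h1 using 1
  · rfl
  · ext k
    simp [IsBoundedBilinearMap.deriv_apply]

set_option maxHeartbeats 1000000

/-- Higher-order accuracy of the `m = 3` modified secant vector: if `f` is three times
continuously differentiable, then with `x_k = x_{k+1} - s`,
`6(f_k − f_{k+1}) + 3(g_k + g_{k+1})ᵀ s + sᵀ y_k − sᵀ ∇²f(x_{k+1}) s = o(‖s‖³)`
as `s → 0`. -/
theorem stmt_19 {n : ℕ} (f : EuclideanSpace ℝ (Fin n) → ℝ)
    (hf : ContDiff ℝ 3 f) (x : EuclideanSpace ℝ (Fin n)) :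
    (fun s : EuclideanSpace ℝ (Fin n) =>
        6 * (f (x - s) - f x) + 3 * ⟪gradient f (x - s) + gradient f x, s⟫ +
          ⟪s, gradient f x - gradient f (x - s)⟫ -
          ⟪s, fderiv ℝ (gradient f) x s⟫)
      =o[nhds 0] (fun s : EuclideanSpace ℝ (Fin n) => ‖s‖ ^ 3) := by
  let E := EuclideanSpace ℝ (Fin n)
  let F1 := fderiv ℝ f
  let F2 := fderiv ℝ F1
  let D2 : E →L[ℝ] E →L[ℝ] ℝ := F2 x
  let D3 := fderiv ℝ F2 x
  have hf1 : ContDiff ℝ 2 F1 := hf.fderiv_right (by norm_num)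
  have hf2 : ContDiff ℝ 1 F2 := hf1.fderiv_right (by norm_num)
  have hdf : Differentiable ℝ f := hf.differentiable (by norm_num)
  have hdF1 : Differentiable ℝ F1 := hf1.differentiable two_ne_zero
  have hdF2 : Differentiable ℝ F2 := hf2.differentiable one_ne_zero
  have hF2x : HasFDerivAt F2 D3 x := (hdF2 x).hasFDerivAt
  -- symmetry of the second derivative
  have sym2 : ∀ v w, D2 v w = D2 w v := fun v w =>
    second_derivative_symmetric (fun y => (hdf y).hasFDerivAt) ((hdF1 x).hasFDerivAt) v w
  -- symmetry of the third derivative in the first two slots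
  have sym12 : ∀ v w u, D3 v w u = D3 w v u := by
    intro v w u
    have := second_derivative_symmetric (f := F1) (fun y => (hdF1 y).hasFDerivAt) hF2x v w
    rw [this]
  -- symmetry of the third derivative in the last two slots
  have sym23 : ∀ a b c, D3 a b c = D3 a c b := by
    intro a b c
    have h1 : HasFDerivAt (fun y => F2 y b c) _ x :=
      (hF2x.clm_apply (hasFDerivAt_const b x)).clm_apply (hasFDerivAt_const c x)
    have h2 : HasFDerivAt (fun y => F2 y c b) _ x :=
      (hF2x.clm_apply (hasFDerivAt_const c x)).clm_apply (hasFDerivAt_const b x)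
    have hfun : (fun y : E => F2 y b c) = fun y => F2 y c b := by
      funext y
      exact ((hf.contDiffAt (x := y)).isSymmSndFDerivAt (by norm_num)) b c
    rw [hfun] at h1
    have := ContinuousLinearMap.ext_iff.1 (h1.unique h2) a
    simpa using this
  -- derivative of h ↦ F1 (x + h)
  have hshift1 : ∀ h : E, HasFDerivAt (fun h : E => F1 (x + h)) (F2 (x + h)) h := by
    intro h
    have := (hdF1 (x + h)).hasFDerivAt.comp (f := fun h' : E => x + h') h
      ((hasFDerivAt_id h).const_add x)
    simpa [Function.comp_def] using this
  have hshift0 : ∀ h : E, HasFDerivAt (fun h : E => f (x + h)) (F1 (x + h)) h := by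
    intro h
    have := (hdf (x + h)).hasFDerivAt.comp (f := fun h' : E => x + h') h
      ((hasFDerivAt_id h).const_add x)
    simpa [Function.comp_def] using this
  -- the second-order remainder of F1
  set R2 : E → (E →L[ℝ] ℝ) :=
    fun h => F1 (x + h) - F1 x - D2 h - (2⁻¹ : ℝ) • (D3 h h) with hR2def
  have hR2 : ∀ h : E, HasFDerivAt R2 (F2 (x + h) - F2 x - D3 h) h := by
    intro h
    have hd := (((hshift1 h).sub_const (F1 x)).sub (D2.hasFDerivAt (x := h))).sub
      ((quad_hasFDerivAt D3 h).const_smul (2⁻¹ : ℝ))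
    refine hd.congr_fderiv ?_
    ext k u
    have h1 := sym12 k h u
    simp only [ContinuousLinearMap.sub_apply, ContinuousLinearMap.smul_apply,
      ContinuousLinearMap.add_apply, ContinuousLinearMap.flip_apply, smul_eq_mul]
    linarith
  have ho2 : (fun h : E => F2 (x + h) - F2 x - D3 h) =o[nhds 0] fun h : E => ‖h‖ ^ 1 := by
    have h0 := (hasFDerivAt_iff_isLittleO_nhds_zero (𝕜 := ℝ) (E := EuclideanSpace ℝ (Fin n)) (F := EuclideanSpace ℝ (Fin n) →L[ℝ] EuclideanSpace ℝ (Fin n) →L[ℝ] ℝ)).1 hF2x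
    have := h0.norm_right
    simpa using this
  have E2 : R2 =o[nhds 0] fun h : E => ‖h‖ ^ 2 := by
    have h0 : R2 0 = 0 := by simp [hR2def]
    simpa using aux_littleO_step hR2 h0 ho2
  -- the third-order remainder of f
  set R1 : E → ℝ := fun h => f (x + h) - f x - F1 x h - (2⁻¹ : ℝ) • (D2 h h)
    - (6⁻¹ : ℝ) • (D3 h h h) with hR1def
  have hcube : ∀ h : E, HasFDerivAt (fun z : E => D3 z z z)
      (((isBoundedBilinearMap_apply (𝕜 := ℝ) (E := E) (F := ℝ)).deriv (D3 h h, h)).comp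
        ((D3 h + D3.flip h).prod (ContinuousLinearMap.id ℝ E))) h := by
    intro h
    exact ((isBoundedBilinearMap_apply (𝕜 := ℝ) (E := E) (F := ℝ)).hasFDerivAt
      (D3 h h, h)).comp (f := fun z : E => (D3 z z, z)) h
      ((quad_hasFDerivAt D3 h).prodMk (hasFDerivAt_id h))
  have hR1 : ∀ h : E, HasFDerivAt R1 (R2 h) h := by
    intro h
    have hd := ((((hshift0 h).sub_const (f x)).sub ((F1 x).hasFDerivAt (x := h))).sub
      ((quad_hasFDerivAt D2 h).const_smul (2⁻¹ : ℝ))).sub ((hcube h).const_smul (6⁻¹ : ℝ))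
    refine hd.congr_fderiv ?_
    ext k
    have e1 := sym2 h k
    have e2 := sym12 k h h
    have e3 := sym23 h k h
    simp only [hR2def, ContinuousLinearMap.sub_apply, ContinuousLinearMap.smul_apply,
      ContinuousLinearMap.add_apply, ContinuousLinearMap.flip_apply, smul_eq_mul,
      ContinuousLinearMap.comp_apply, ContinuousLinearMap.prod_apply,
      ContinuousLinearMap.coe_id', id_eq, IsBoundedBilinearMap.deriv_apply]
    linarith
  have E1 : R1 =o[nhds 0] fun h : E => ‖h‖ ^ 3 := by
    have h0 : R1 0 = 0 := by simp [hR1def]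
    simpa using aux_littleO_step hR1 h0 E2
  -- the gradient and its derivative in terms of F1, D2
  have ginner : ∀ (y : E) (v : E), ⟪gradient f y, v⟫ = F1 y v := fun y v =>
    InnerProductSpace.toDual_symm_apply
  let ℓclm : (E →L[ℝ] ℝ) →L[ℝ] E := LinearMap.mkContinuous
    { toFun := fun u => (InnerProductSpace.toDual ℝ E).symm u
      map_add' := fun u v => by simp
      map_smul' := fun c u => by simp }
    1 (fun u => by simpa using ((InnerProductSpace.toDual ℝ E).symm.norm_map u).le)
  have hgrad : HasFDerivAt (gradient f) (ℓclm.comp D2) x := by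
    exact ℓclm.hasFDerivAt.comp (f := F1) x (hdF1 x).hasFDerivAt
  have innfact : ∀ s : E, ⟪s, fderiv ℝ (gradient f) x s⟫ = D2 s s := by
    intro s
    rw [hgrad.fderiv, real_inner_comm]
    simp only [ContinuousLinearMap.comp_apply]
    exact InnerProductSpace.toDual_symm_apply
  -- the algebraic identity
  have key : (fun s : E =>
        6 * (f (x - s) - f x) + 3 * ⟪gradient f (x - s) + gradient f x, s⟫ +
          ⟪s, gradient f x - gradient f (x - s)⟫ -
          ⟪s, fderiv ℝ (gradient f) x s⟫)
      = fun s : E => 6 * R1 (-s) + 2 * R2 (-s) s := by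
    funext s
    have c1 : ⟪gradient f (x + -s), s⟫ = F1 (x + -s) s := ginner _ _
    have c2 : ⟪gradient f x, s⟫ = F1 x s := ginner _ _
    have c3 : ⟪s, gradient f x⟫ = F1 x s := by rw [real_inner_comm]; exact ginner _ _
    have c4 : ⟪s, gradient f (x + -s)⟫ = F1 (x + -s) s := by
      rw [real_inner_comm]; exact ginner _ _
    rw [sub_eq_add_neg x s, inner_add_left, inner_sub_right, c1, c2, c3, c4,
      innfact s, hR1def, hR2def]
    simp only [ContinuousLinearMap.sub_apply, ContinuousLinearMap.smul_apply,
      map_neg, ContinuousLinearMap.neg_apply, smul_eq_mul]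
    ring
  rw [key]
  have hneg : Tendsto (fun s : E => -s) (nhds 0) (nhds 0) := by
    simpa using (tendsto_id (x := nhds (0 : E))).neg
  have o1 : (fun s : E => R1 (-s)) =o[nhds 0] fun s : E => ‖s‖ ^ 3 := by
    simpa [Function.comp_def, norm_neg (E := EuclideanSpace ℝ (Fin n))] using E1.comp_tendsto hneg
  have o2 : (fun s : E => R2 (-s) s) =o[nhds 0] fun s : E => ‖s‖ ^ 3 := by
    have h1 : (fun s : E => R2 (-s) s) =O[nhds 0] fun s => ‖R2 (-s)‖ * ‖s‖ := by
      apply isBigO_of_le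
      intro s
      calc ‖(R2 (-s)) s‖ ≤ ‖R2 (-s)‖ * ‖s‖ := (R2 (-s)).le_opNorm s
        _ = ‖‖R2 (-s)‖ * ‖s‖‖ := by rw [Real.norm_of_nonneg (by positivity)]
    have h2' : (fun s : E => R2 (-s)) =o[nhds 0] fun s : E => ‖s‖ ^ 2 := by
      simpa [Function.comp_def, norm_neg] using E2.comp_tendsto hneg
    have h2 : (fun s : E => ‖R2 (-s)‖ * ‖s‖) =o[nhds 0] fun s : E => ‖s‖ ^ 2 * ‖s‖ :=
      h2'.norm_left.mul_isBigO (isBigO_refl (fun s : E => ‖s‖) _)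
    have := h1.trans_isLittleO h2
    simpa [← pow_succ] using this
  exact (o1.const_mul_left 6).add (o2.const_mul_left 2)
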